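/- Let ξ be an element of the symplectic Lie algebra sp(2n, ℝ) and P a symmetric idempotent matrix. Define the curve P(t) as the orthogonal projection onto e^{tξ}·W where W = range(P). Then the derivative at t = 0 is Ṗ(0) = (Id - P)ξP + Pξᵀ(Id - P), which equals ½[P,[P, ξ + ξᵀ]] - ½[P, ξ - ξᵀ]. -/

import Mathlib

open Matrix

attribute [local instance] Matrix.linftyOpNormedRing Matrix.linftyOpNormedAlgebra

/-- The matrix commutator. -/
def mcomm {m : Type*} [Fintype m] (A B : Matrix m m ℝ) : Matrix m m ℝ := A * B - B * A

/-- The standard complex structure `J = [[0, -1], [1, 0]]` on `ℝ^{2n} = ℝⁿ ⊕ ℝⁿ`. -/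
def stdJ (n : ℕ) : Matrix (Fin n ⊕ Fin n) (Fin n ⊕ Fin n) ℝ :=
  Matrix.fromBlocks 0 (-1) 1 0

section aux
variable {m : Type*} [Fintype m] [DecidableEq m]

noncomputable def entryCLM (i j : m) : Matrix m m ℝ →L[ℝ] ℝ :=
  LinearMap.toContinuousLinearMap
    { toFun := fun M => M i j, map_add' := fun _ _ => rfl, map_smul' := fun _ _ => rfl }

theorem exp_entry_deriv (ξ : Matrix m m ℝ) (i j : m) :
    HasDerivAt (fun t : ℝ => NormedSpace.exp (t • ξ) i j) (ξ i j) 0 := by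
  have h := hasDerivAt_exp_smul_const (𝕂 := ℝ) ξ (0 : ℝ)
  have h2 := (entryCLM i j).hasFDerivAt.comp_hasDerivAt 0 h
  simp only [zero_smul, NormedSpace.exp_zero, one_mul] at h2
  exact h2

theorem proj_fix {A B : Matrix m m ℝ} (hA : A * A = A)
    (h : ∀ v, B.mulVec v ∈ LinearMap.range A.mulVecLin) : A * B = B := by
  ext i j
  have := h (Pi.single j 1)
  obtain ⟨y, hy⟩ := this
  have h2 : A.mulVec (B.mulVec (Pi.single j 1)) = B.mulVec (Pi.single j 1) := by
    simp only [mulVecLin_apply] at hy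
    rw [← hy, mulVec_mulVec, hA]
  have h3 := congrFun h2 i
  simpa [mulVec_single, mul_apply, mulVec, dotProduct, Pi.single_apply, mul_ite, Finset.sum_ite_eq'] using h3
end aux

/-- For `ξ ∈ sp(2n, ℝ)` and `P t` the orthogonal projection onto
`e^{tξ}·W` where `W = range (P 0)`, the derivative at `t = 0` is
`Ṗ(0) = (Id - P)ξP + Pξᵀ(Id - P) = ½[P,[P, ξ + ξᵀ]] - ½[P, ξ - ξᵀ]`. -/
theorem fundamental_vector_field_formula {n : ℕ}
    (ξ : Matrix (Fin n ⊕ Fin n) (Fin n ⊕ Fin n) ℝ)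
    (hξ : ξ * stdJ n + stdJ n * ξᵀ = 0)
    (P : ℝ → Matrix (Fin n ⊕ Fin n) (Fin n ⊕ Fin n) ℝ)
    (hPsymm : ∀ t, (P t)ᵀ = P t) (hPidem : ∀ t, P t * P t = P t)
    (hPrange : ∀ t, LinearMap.range (P t).mulVecLin =
      Submodule.map (NormedSpace.exp (t • ξ)).mulVecLin (LinearMap.range (P 0).mulVecLin))
    (D : Matrix (Fin n ⊕ Fin n) (Fin n ⊕ Fin n) ℝ)
    (hderiv : ∀ i j, HasDerivAt (fun t => P t i j) (D i j) 0) :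
    D = (1 - P 0) * ξ * P 0 + P 0 * ξᵀ * (1 - P 0) ∧
    D = (1 / 2 : ℝ) • mcomm (P 0) (mcomm (P 0) (ξ + ξᵀ))
          - (1 / 2 : ℝ) • mcomm (P 0) (ξ - ξᵀ) := by
  set Q := P 0 with hQdef
  have hQ : Q * Q = Q := hPidem 0
  set E : ℝ → Matrix (Fin n ⊕ Fin n) (Fin n ⊕ Fin n) ℝ :=
    fun t => NormedSpace.exp (t • ξ) with hE
  -- key range identity
  have key : ∀ t, P t * (E t * Q) = E t * Q := by
    intro t
    refine proj_fix (hPidem t) fun v => ?_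
    rw [hPrange t]
    exact ⟨Q.mulVec v, ⟨v, rfl⟩, by simp [hE, mulVecLin_apply, mulVec_mulVec]⟩
  have hE0 : E 0 = 1 := by simp [hE, NormedSpace.exp_zero]
  -- entrywise derivative of E t * Q at 0
  have hEQ : ∀ i j, HasDerivAt (fun t => (E t * Q) i j) ((ξ * Q) i j) 0 := by
    intro i j
    have : HasDerivAt (fun t => ∑ k, E t i k * Q k j) (∑ k, ξ i k * Q k j) 0 :=
      HasDerivAt.fun_sum fun k _ => (exp_entry_deriv ξ i k).mul_const (Q k j)
    simpa [mul_apply] using this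
  -- differentiate key identity: D*Q + Q*(ξ*Q) = ξ*Q
  have eq1 : D * Q + Q * (ξ * Q) = ξ * Q := by
    ext i j
    have h1 : HasDerivAt (fun t => (P t * (E t * Q)) i j)
        ((D * Q) i j + (Q * (ξ * Q)) i j) 0 := by
      have : HasDerivAt (fun t => ∑ k, P t i k * (E t * Q) k j)
          (∑ k, (D i k * (E 0 * Q) k j + P 0 i k * (ξ * Q) k j)) 0 :=
        HasDerivAt.fun_sum fun k _ => (hderiv i k).mul (hEQ k j)
      simp only [hE0, Matrix.one_mul] at this
      simpa [mul_apply, Finset.sum_add_distrib] using this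
    have h2 : HasDerivAt (fun t => (P t * (E t * Q)) i j) ((ξ * Q) i j) 0 := by
      have := hEQ i j
      refine this.congr_of_eventuallyEq ?_
      filter_upwards with t
      rw [key t]
    have := h1.unique h2
    simpa [Matrix.add_apply] using this
  have hDQ : D * Q = ξ * Q - Q * ξ * Q := by
    rw [← Matrix.mul_assoc] at eq1
    exact eq_sub_of_add_eq eq1
  -- symmetry of D
  have hDsymm : Dᵀ = D := by
    ext i j
    have h1 : HasDerivAt (fun t => P t j i) (D i j) 0 := by
      refine (hderiv i j).congr_of_eventuallyEq ?_
      filter_upwards with t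
      simpa [Matrix.transpose_apply] using congrFun (congrFun (hPsymm t) i) j
    exact ((hderiv j i).unique h1)
  have hQsymm : Qᵀ = Q := hPsymm 0
  -- D = D*Q + Q*D
  have eq2 : D = D * Q + Q * D := by
    ext i j
    have h1 : HasDerivAt (fun t => (P t * P t) i j) ((D * Q) i j + (Q * D) i j) 0 := by
      have : HasDerivAt (fun t => ∑ k, P t i k * P t k j)
          (∑ k, (D i k * P 0 k j + P 0 i k * D k j)) 0 :=
        HasDerivAt.fun_sum fun k _ => (hderiv i k).mul (hderiv k j)
      simpa [mul_apply, Finset.sum_add_distrib] using this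
    have h2 : HasDerivAt (fun t => (P t * P t) i j) (D i j) 0 := by
      refine (hderiv i j).congr_of_eventuallyEq ?_
      filter_upwards with t
      rw [hPidem t]
    simpa [Matrix.add_apply] using (h2.unique h1)
  have hQD : Q * D = (D * Q)ᵀ := by
    rw [Matrix.transpose_mul, hDsymm, hQsymm]
  have main : D = (1 - Q) * ξ * Q + Q * ξᵀ * (1 - Q) := by
    rw [eq2, hQD, hDQ]
    simp only [Matrix.transpose_sub, Matrix.transpose_mul, hQsymm, Matrix.sub_mul,
      Matrix.mul_sub, Matrix.one_mul, Matrix.mul_one, Matrix.mul_assoc]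
  refine ⟨main, ?_⟩
  have hxQQ : ξ * Q * Q = ξ * Q := by rw [Matrix.mul_assoc, hQ]
  have hxtQQ : ξᵀ * Q * Q = ξᵀ * Q := by rw [Matrix.mul_assoc, hQ]
  rw [main]
  simp only [mcomm, Matrix.mul_sub, Matrix.sub_mul, Matrix.mul_add, Matrix.add_mul,
    Matrix.mul_one, Matrix.one_mul, smul_sub, smul_add, ← Matrix.mul_assoc, hQ, hxQQ, hxtQQ]
  module
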